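/- Let E be the set of subspaces of V charged by a μ-stationary probability measure ν on P(V), and let r₀ be the minimal dimension of subspaces in E. Then any two distinct subspaces W ≠ W' in E of dimension r₀ satisfy ν([W ∩ W']) = 0, and consequently the set F of dimension-r₀ subspaces attaining the supremal mass α > 0 is finite, with cardinality at most 1/α. -/

import Mathlib

set_option linter.unusedSectionVars false
set_option linter.unusedVariables false

open MeasureTheory Filter Topology Metric ProbabilityTheory Classical

noncomputable section

variable (V : Type*) [NormedAddCommGroup V] [NormedSpace ℝ V] [FiniteDimensional ℝ V]

/-- The general linear group of `V`, realized as units of continuous linear endomorphisms. -/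
abbrev GLV := (V →L[ℝ] V)ˣ

variable {V}

lemma gl_injective (g : GLV V) : Function.Injective fun v : V => g.val v := by
  intro x y h
  have h2 : (↑g⁻¹ : V →L[ℝ] V) (g.val x) = (↑g⁻¹ : V →L[ℝ] V) (g.val y) := congrArg _ h
  rwa [← ContinuousLinearMap.mul_apply, ← ContinuousLinearMap.mul_apply, Units.inv_mul,
    ContinuousLinearMap.one_apply, ContinuousLinearMap.one_apply] at h2

/-- The action of `GL(V)` on the projective space `P(V)`. -/
def act (g : GLV V) (x : Projectivization ℝ V) : Projectivization ℝ V :=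
  Projectivization.map ((g.val : V →L[ℝ] V) : V →ₗ[ℝ] V) (fun _ _ h => gl_injective g h) x

instance : TopologicalSpace (Projectivization ℝ V) := instTopologicalSpaceQuotient
instance : MeasurableSpace (Projectivization ℝ V) := borel _
instance : MeasurableSpace (GLV V) := borel _

/-- The projectivization `[W] ⊆ P(V)` of a subspace `W ≤ V`. -/
def projSet (W : Submodule ℝ V) : Set (Projectivization ℝ V) := {x | x.rep ∈ W}

/-- Convolution of measures on `GL(V)`. -/
def mconv (μ₁ μ₂ : Measure (GLV V)) : Measure (GLV V) := (μ₁.prod μ₂).map fun p => p.1 * p.2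

/-- Convolution powers `μ^{*n}` of a measure on `GL(V)` (with `μ^{*0} = δ_id`). -/
def convPow (μ : Measure (GLV V)) : ℕ → Measure (GLV V)
  | 0 => Measure.dirac 1
  | n+1 => mconv μ (convPow μ n)

/-- Convolution `μ ∗ ν` of a measure `μ` on `GL(V)` with a measure `ν` on `P(V)`. -/
def conv (μ : Measure (GLV V)) (ν : Measure (Projectivization ℝ V)) :
    Measure (Projectivization ℝ V) :=
  (μ.prod ν).map fun p => act p.1 p.2

/-- `ν` is `μ`-stationary: `μ ∗ ν = ν`. -/
def IsMuStationary (μ : Measure (GLV V)) (ν : Measure (Projectivization ℝ V)) : Prop :=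
  conv μ ν = ν

/-- The cocycle average `α(ν) = ∬ log (‖g v‖/‖v‖) dμ(g) dν([v])`. -/
def cocycleAvg (μ : Measure (GLV V)) (ν : Measure (Projectivization ℝ V)) : ℝ :=
  ∫ g, ∫ x, Real.log (‖g.val x.rep‖ / ‖x.rep‖) ∂ν ∂μ

/-- `ν` is `μ`-stationary and ergodic (extremal among stationary probability measures). -/
def IsErgodicStationary (μ : Measure (GLV V)) (ν : Measure (Projectivization ℝ V)) : Prop :=
  IsMuStationary μ ν ∧ ∀ ν₁ ν₂ : Measure (Projectivization ℝ V), IsProbabilityMeasure ν₁ →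
    IsProbabilityMeasure ν₂ → IsMuStationary μ ν₁ → IsMuStationary μ ν₂ → ∀ t : ℝ, 0 < t → t < 1 →
      ν = ENNReal.ofReal t • ν₁ + ENNReal.ofReal (1 - t) • ν₂ → ν₁ = ν

/-- The left random-walk word `L_n = ω_{n-1} ⋯ ω_0`. -/
def word (ω : ℕ → GLV V) : ℕ → GLV V
  | 0 => 1
  | n+1 => ω n * word ω n

/-- The norm of the restriction of `g` to the subspace `W` (the `A`-block of `g`). -/
def opNormOn (W : Submodule ℝ V) (g : GLV V) : ℝ :=
  sSup ((fun w : V => ‖g.val w‖) '' {w | w ∈ W ∧ ‖w‖ ≤ 1})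

/-- `μ` has a finite first moment: `∫ log N(g) dμ(g) < ∞`, `N(g) = max (‖g‖, ‖g⁻¹‖)`. -/
def FirstMoment (μ : Measure (GLV V)) : Prop :=
  Integrable (fun g : GLV V =>
    Real.log (max ‖(g.val : V →L[ℝ] V)‖ ‖((g⁻¹).val : V →L[ℝ] V)‖)) μ

/-- `W` is `Γ_μ`-invariant (for a.e. `g`, `g W = W`). -/
def AEInv (μ : Measure (GLV V)) (W : Submodule ℝ V) : Prop :=
  ∀ᵐ g ∂μ, W.map ((g.val : V →L[ℝ] V) : V →ₗ[ℝ] V) = W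

/-- `(P, (ωₙ))` is an iid sequence of law `μ` on the Bernoulli space `(GLV V)^ℕ`. -/
def IsBernoulli (μ : Measure (GLV V)) (P : Measure (ℕ → GLV V)) : Prop :=
  iIndepFun (fun n (ω : ℕ → GLV V) => ω n) P ∧
    ∀ n, P.map (fun ω => ω n) = μ

/-- The projection `P(V) ∖ P(ker π) → P(Q)` induced by a surjection `π : V → Q`
(junk value on `P(ker π)`). -/
def projMapQ {Q : Type*} [NormedAddCommGroup Q] [NormedSpace ℝ Q] [Nontrivial Q]
    (π : V →ₗ[ℝ] Q) (x : Projectivization ℝ V) : Projectivization ℝ Q :=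
  if h : π x.rep ≠ 0 then Projectivization.mk ℝ (π x.rep) h
  else Projectivization.mk ℝ (Classical.choose (exists_ne (0 : Q)))
    (Classical.choose_spec (exists_ne (0 : Q)))

/-- The partially defined projection `P(V) ∖ P(U) → P(V/U)`, `Option`-valued. -/
def quotMapO (U : Submodule ℝ V) (x : Projectivization ℝ V) :
    Option (Projectivization ℝ (V ⧸ U)) :=
  if h : U.mkQ x.rep ≠ 0 then some (Projectivization.mk ℝ (U.mkQ x.rep) h) else none

/-- The linear span `F_ν` of the support of a measure `ν` on `P(V)`: the smallest
subspace whose projectivization has full measure. -/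
def spanOf (ν : Measure (Projectivization ℝ V)) : Submodule ℝ V :=
  sInf {U : Submodule ℝ V | ν (projSet U) = 1}


lemma rep_mem_iff (W : Submodule ℝ V) {v : V} (hv : v ≠ 0) :
    (Projectivization.mk ℝ v hv).rep ∈ W ↔ v ∈ W := by
  obtain ⟨a, ha⟩ := Projectivization.exists_smul_eq_mk_rep ℝ v hv
  rw [← ha, Units.smul_def]
  exact W.smul_mem_iff a.ne_zero

instance : BorelSpace (Projectivization ℝ V) := ⟨rfl⟩

lemma isClosed_projSet (W : Submodule ℝ V) : IsClosed (projSet W) := by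
  rw [← isOpen_compl_iff]
  change @IsOpen (Quotient (projectivizationSetoid ℝ V)) instTopologicalSpaceQuotient (projSet W)ᶜ
  rw [← (@isQuotientMap_quotient_mk' _ _ (projectivizationSetoid ℝ V)).isOpen_preimage]
  have : (@Quotient.mk' _ (projectivizationSetoid ℝ V)) ⁻¹' (projSet W)ᶜ =
      Subtype.val ⁻¹' ((W : Set V)ᶜ) := by
    ext ⟨v, hv⟩
    simp only [Set.mem_preimage, Set.mem_compl_iff, projSet, Set.mem_setOf_eq]
    exact not_congr (rep_mem_iff W hv)
  rw [this]
  exact W.closed_of_finiteDimensional.isOpen_compl.preimage continuous_subtype_val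

lemma measurableSet_projSet (W : Submodule ℝ V) : MeasurableSet (projSet W) :=
  (isClosed_projSet W).measurableSet

lemma projSet_inf (W W' : Submodule ℝ V) : projSet (W ⊓ W') = projSet W ∩ projSet W' := by
  ext x; simp [projSet, Submodule.mem_inf]

lemma projSet_bot : projSet (⊥ : Submodule ℝ V) = ∅ := by
  ext x; simp [projSet, Projectivization.rep_nonzero]

lemma projSet_top : projSet (⊤ : Submodule ℝ V) = Set.univ := by
  ext x; simp [projSet]

/-- Distinct minimal-dimensional subspaces charged by a μ-stationary
measure intersect in ν-null projective sets, the supremal mass α is positive, and the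
set F of minimal-dimensional subspaces attaining α is finite of cardinality at most 1/α. -/
theorem minimal_charged_subspaces_finite [Nontrivial V]
    (μ : Measure (GLV V)) [IsProbabilityMeasure μ]
    (ν : Measure (Projectivization ℝ V)) [IsProbabilityMeasure ν]
    (hν : IsMuStationary μ ν)
    (E : Set (Submodule ℝ V)) (hE : E = {W | W ≠ ⊥ ∧ 0 < ν (projSet W)})
    (r₀ : ℕ) (hr₀ : r₀ = sInf ((fun W : Submodule ℝ V => Module.finrank ℝ W) '' E))
    (α : ENNReal) (hα : α = ⨆ W ∈ {W ∈ E | Module.finrank ℝ W = r₀}, ν (projSet W))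
    (F : Set (Submodule ℝ V))
    (hF : F = {W ∈ E | Module.finrank ℝ W = r₀ ∧ ν (projSet W) = α}) :
    (∀ W ∈ E, ∀ W' ∈ E, Module.finrank ℝ W = r₀ → Module.finrank ℝ W' = r₀ → W ≠ W' →
      ν (projSet (W ⊓ W')) = 0) ∧
    0 < α ∧ F.Finite ∧ (F.ncard : ENNReal) ≤ 1 / α := by
  subst hE hr₀ hα hF
  set E : Set (Submodule ℝ V) := {W | W ≠ ⊥ ∧ 0 < ν (projSet W)} with hE
  set r₀ : ℕ := sInf ((fun W : Submodule ℝ V => Module.finrank ℝ W) '' E) with hr₀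
  -- Part 1: distinct minimal subspaces have null intersection
  have h1 : ∀ W ∈ E, ∀ W' ∈ E, Module.finrank ℝ W = r₀ → Module.finrank ℝ W' = r₀ →
      W ≠ W' → ν (projSet (W ⊓ W')) = 0 := by
    intro W hW W' hW' hd hd' hne
    by_contra h0
    have hpos : 0 < ν (projSet (W ⊓ W')) := pos_iff_ne_zero.mpr h0
    have hbot : W ⊓ W' ≠ ⊥ := by
      intro hb
      rw [hb, projSet_bot] at hpos
      simp at hpos
    have hmem : W ⊓ W' ∈ E := ⟨hbot, hpos⟩
    have hle : r₀ ≤ Module.finrank ℝ ↥(W ⊓ W') := Nat.sInf_le ⟨W ⊓ W', hmem, rfl⟩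
    have heq : W ⊓ W' = W := Submodule.eq_of_le_of_finrank_eq inf_le_left
      (le_antisymm (Submodule.finrank_mono inf_le_left) (hd ▸ hle))
    have heq' : W ⊓ W' = W' := Submodule.eq_of_le_of_finrank_eq inf_le_right
      (le_antisymm (Submodule.finrank_mono inf_le_right) (hd' ▸ hle))
    exact hne (heq ▸ heq')
  refine ⟨h1, ?_⟩
  -- E is nonempty, so r₀ is attained
  have htopE : (⊤ : Submodule ℝ V) ∈ E := by
    refine ⟨?_, ?_⟩
    · intro h
      obtain ⟨x, hx⟩ := exists_ne (0 : V)
      have hxm : x ∈ (⊤ : Submodule ℝ V) := trivial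
      rw [h] at hxm
      exact hx ((Submodule.mem_bot ℝ).mp hxm)
    · rw [projSet_top, measure_univ]; exact zero_lt_one
  have hne : ((fun W : Submodule ℝ V => Module.finrank ℝ W) '' E).Nonempty :=
    ⟨_, ⟨⊤, htopE, rfl⟩⟩
  obtain ⟨W₀, hW₀E, hW₀r⟩ : ∃ W₀ ∈ E, Module.finrank ℝ W₀ = r₀ := by
    have := Nat.sInf_mem hne
    obtain ⟨W₀, hW₀, hr⟩ := this
    exact ⟨W₀, hW₀, hr⟩
  set α : ENNReal := ⨆ W ∈ {W ∈ E | Module.finrank ℝ W = r₀}, ν (projSet W) with hα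
  have hα_le : ∀ W ∈ {W ∈ E | Module.finrank ℝ W = r₀}, ν (projSet W) ≤ α := by
    intro W hW
    exact le_iSup₂ (f := fun W _ => ν (projSet W)) W hW
  have hαpos : 0 < α := lt_of_lt_of_le hW₀E.2 (hα_le W₀ ⟨hW₀E, hW₀r⟩)
  have hα1 : α ≤ 1 := by
    refine iSup₂_le fun W _ => ?_
    exact prob_le_one
  have hαtop : α ≠ ⊤ := fun h => by simp [h] at hα1
  refine ⟨hαpos, ?_⟩
  set F : Set (Submodule ℝ V) :=
    {W ∈ E | Module.finrank ℝ W = r₀ ∧ ν (projSet W) = α} with hF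
  -- key cardinality bound for finite subsets of F
  have key : ∀ S : Finset (Submodule ℝ V), ↑S ⊆ F → (S.card : ENNReal) * α ≤ 1 := by
    intro S hS
    have hdisj : (↑S : Set (Submodule ℝ V)).Pairwise
        (Function.onFun (MeasureTheory.AEDisjoint ν) fun W => projSet W) := by
      intro W hW W' hW' hWW'
      have hWF := hS hW
      have hW'F := hS hW'
      show ν (projSet W ∩ projSet W') = 0
      rw [← projSet_inf]
      exact h1 W hWF.1 W' hW'F.1 hWF.2.1 hW'F.2.1 hWW'
    have hsum : ν (⋃ W ∈ S, projSet W) = ∑ W ∈ S, ν (projSet W) :=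
      measure_biUnion_finset₀ hdisj fun W _ => (measurableSet_projSet W).nullMeasurableSet
    calc (S.card : ENNReal) * α = ∑ W ∈ S, ν (projSet W) := by
          rw [Finset.sum_congr rfl (fun W hW => (hS hW).2.2), Finset.sum_const,
            nsmul_eq_mul]
      _ = ν (⋃ W ∈ S, projSet W) := hsum.symm
      _ ≤ 1 := prob_le_one
  have key' : ∀ S : Finset (Submodule ℝ V), ↑S ⊆ F → (S.card : ENNReal) ≤ 1 / α := by
    intro S hS
    exact (ENNReal.le_div_iff_mul_le (Or.inl hαpos.ne') (Or.inl hαtop)).mpr (key S hS)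
  have hfin : F.Finite := by
    by_contra h
    have hinf : F.Infinite := h
    obtain ⟨n, hn⟩ := ENNReal.exists_nat_gt (ENNReal.div_lt_top ENNReal.one_ne_top hαpos.ne').ne
    obtain ⟨T, hTsub, hTcard⟩ := hinf.exists_subset_card_eq n
    have := key' T hTsub
    rw [hTcard] at this
    exact absurd this (not_le.mpr hn)
  refine ⟨hfin, ?_⟩
  rw [Set.ncard_eq_toFinset_card F hfin]
  exact key' hfin.toFinset (by simp)


end
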